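/- Let a, b, c ∈ ℝ³ be fixed, let k = (c − b)/‖c − b‖ with b ≠ c, and let d ∈ ℝ³. Let d' = c + R_θ(d − c), where R_θ is the Rodrigues rotation by angle θ about axis k. If the dihedral angle τ(a,b,c,d) is defined (normals nonzero), then cos τ(a,b,c,d') = cos(τ(a,b,c,d) + θ) and sin τ(a,b,c,d') = sin(τ(a,b,c,d) + θ). -/

import Mathlib

open scoped RealInnerProductSpace

noncomputable def cross3 (u v : EuclideanSpace ℝ (Fin 3)) : EuclideanSpace ℝ (Fin 3) :=
  WithLp.toLp 2 ![u 1 * v 2 - u 2 * v 1, u 2 * v 0 - u 0 * v 2, u 0 * v 1 - u 1 * v 0]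

/-- First normal vector of the dihedral angle: `n₁ = (b − a) × (c − b)`. -/
noncomputable def dihN1 (a b c : EuclideanSpace ℝ (Fin 3)) : EuclideanSpace ℝ (Fin 3) :=
  cross3 (b - a) (c - b)

/-- Second normal vector of the dihedral angle: `n₂ = (c − b) × (d − c)`. -/
noncomputable def dihN2 (b c d : EuclideanSpace ℝ (Fin 3)) : EuclideanSpace ℝ (Fin 3) :=
  cross3 (c - b) (d - c)

/-- Cosine of the dihedral angle `τ(a,b,c,d)`. -/
noncomputable def cosDih (a b c d : EuclideanSpace ℝ (Fin 3)) : ℝ :=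
  ⟪dihN1 a b c, dihN2 b c d⟫ / (‖dihN1 a b c‖ * ‖dihN2 b c d‖)

/-- Sine of the dihedral angle `τ(a,b,c,d)`. -/
noncomputable def sinDih (a b c d : EuclideanSpace ℝ (Fin 3)) : ℝ :=
  ⟪c - b, cross3 (dihN1 a b c) (dihN2 b c d)⟫ /
    (‖c - b‖ * ‖dihN1 a b c‖ * ‖dihN2 b c d‖)

/-- The Rodrigues rotation of `v` by angle `θ` about the axis `k`. -/
noncomputable def rodrigues (k : EuclideanSpace ℝ (Fin 3)) (θ : ℝ)
    (v : EuclideanSpace ℝ (Fin 3)) : EuclideanSpace ℝ (Fin 3) :=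
  Real.cos θ • v + Real.sin θ • cross3 k v + ((1 - Real.cos θ) * ⟪k, v⟫) • k

lemma inner3 (x y : EuclideanSpace ℝ (Fin 3)) : ⟪x,y⟫ = x 0 * y 0 + x 1 * y 1 + x 2 * y 2 := by
  simp [PiLp.inner_apply, Fin.sum_univ_three]; ring

lemma cross3_0 (u v : EuclideanSpace ℝ (Fin 3)) : cross3 u v 0 = u 1 * v 2 - u 2 * v 1 := rfl
lemma cross3_1 (u v : EuclideanSpace ℝ (Fin 3)) : cross3 u v 1 = u 2 * v 0 - u 0 * v 2 := rfl
lemma cross3_2 (u v : EuclideanSpace ℝ (Fin 3)) : cross3 u v 2 = u 0 * v 1 - u 1 * v 0 := rfl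

lemma cross3_self (u : EuclideanSpace ℝ (Fin 3)) : cross3 u u = 0 := by
  ext i; fin_cases i <;> simp [cross3_0, cross3_1, cross3_2] <;> ring

lemma cross3_add_right (u x y : EuclideanSpace ℝ (Fin 3)) :
    cross3 u (x + y) = cross3 u x + cross3 u y := by
  ext i; fin_cases i <;>
    simp [cross3_0, cross3_1, cross3_2, PiLp.add_apply] <;> ring

lemma cross3_sub_right (u x y : EuclideanSpace ℝ (Fin 3)) :
    cross3 u (x - y) = cross3 u x - cross3 u y := by
  ext i; fin_cases i <;>
    simp [cross3_0, cross3_1, cross3_2, PiLp.sub_apply] <;> ring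

lemma cross3_smul_right (u : EuclideanSpace ℝ (Fin 3)) (r : ℝ) (x : EuclideanSpace ℝ (Fin 3)) :
    cross3 u (r • x) = r • cross3 u x := by
  ext i; fin_cases i <;>
    simp [cross3_0, cross3_1, cross3_2, PiLp.smul_apply, smul_eq_mul] <;> ring

lemma cross3_smul_left (u : EuclideanSpace ℝ (Fin 3)) (r : ℝ) (x : EuclideanSpace ℝ (Fin 3)) :
    cross3 (r • u) x = r • cross3 u x := by
  ext i; fin_cases i <;>
    simp [cross3_0, cross3_1, cross3_2, PiLp.smul_apply, smul_eq_mul] <;> ring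

lemma cross3_anticomm (x y : EuclideanSpace ℝ (Fin 3)) : cross3 x y = -cross3 y x := by
  ext i; fin_cases i <;>
    simp [cross3_0, cross3_1, cross3_2] <;> ring

lemma cross3_triple (x y z : EuclideanSpace ℝ (Fin 3)) :
    cross3 x (cross3 y z) = ⟪x,z⟫ • y - ⟪x,y⟫ • z := by
  ext i; fin_cases i <;>
    simp [inner3, Fin.sum_univ_three, cross3_0, cross3_1, cross3_2, PiLp.sub_apply,
      PiLp.smul_apply, smul_eq_mul] <;> ring

lemma inner_cross_left (x y : EuclideanSpace ℝ (Fin 3)) : ⟪x, cross3 x y⟫ = 0 := by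
  simp [inner3, Fin.sum_univ_three, cross3_0, cross3_1, cross3_2]; ring

lemma inner_cross_right (x y : EuclideanSpace ℝ (Fin 3)) : ⟪y, cross3 x y⟫ = 0 := by
  simp [inner3, Fin.sum_univ_three, cross3_0, cross3_1, cross3_2]; ring

lemma triple_cyclic (x y z : EuclideanSpace ℝ (Fin 3)) :
    ⟪x, cross3 y z⟫ = ⟪y, cross3 z x⟫ := by
  simp [inner3, Fin.sum_univ_three, cross3_0, cross3_1, cross3_2]; ring

lemma lagrange3 (x y : EuclideanSpace ℝ (Fin 3)) :
    ⟪cross3 x y, cross3 x y⟫ = ⟪x,x⟫ * ⟪y,y⟫ - ⟪x,y⟫ ^ 2 := by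
  simp only [inner3, cross3_0, cross3_1, cross3_2]; ring


/-- Rotating `d` about the bond axis `k = (c − b)/‖c − b‖` by an angle `θ`
(around the point `c`) increments the dihedral angle `τ(a,b,c,d)` by `θ`. -/
theorem dihedral_rotation_update (a b c d : EuclideanSpace ℝ (Fin 3))
    (hbc : b ≠ c) (h1 : dihN1 a b c ≠ 0) (h2 : dihN2 b c d ≠ 0) (θ τ : ℝ)
    (hcos : Real.cos τ = cosDih a b c d) (hsin : Real.sin τ = sinDih a b c d) :
    cosDih a b c (c + rodrigues (‖c - b‖⁻¹ • (c - b)) θ (d - c)) = Real.cos (τ + θ) ∧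
    sinDih a b c (c + rodrigues (‖c - b‖⁻¹ • (c - b)) θ (d - c)) = Real.sin (τ + θ) := by
  set u : EuclideanSpace ℝ (Fin 3) := c - b with hu
  set v : EuclideanSpace ℝ (Fin 3) := d - c with hv
  set n1 : EuclideanSpace ℝ (Fin 3) := dihN1 a b c with hn1def
  set n2 : EuclideanSpace ℝ (Fin 3) := dihN2 b c d with hn2def
  have hun : ‖u‖ ≠ 0 := by
    simp only [hu, ne_eq, norm_eq_zero, sub_eq_zero]
    exact fun h => hbc h.symm
  have hn1 : ‖n1‖ ≠ 0 := norm_ne_zero_iff.mpr h1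
  have hn2 : ‖n2‖ ≠ 0 := norm_ne_zero_iff.mpr h2
  have huu : ⟪u,u⟫ = ‖u‖ ^ 2 := real_inner_self_eq_norm_sq u
  have hn22 : ⟪n2,n2⟫ = ‖n2‖ ^ 2 := real_inner_self_eq_norm_sq n2
  have hn1u : ⟪n1, u⟫ = 0 := by
    rw [hn1def, dihN1, ← hu, real_inner_comm]; exact inner_cross_right _ _
  have hn2u : ⟪n2, u⟫ = 0 := by
    rw [hn2def, dihN2, ← hu, ← hv, real_inner_comm]; exact inner_cross_left _ _
  have hn2v : ⟪n2, v⟫ = 0 := by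
    rw [hn2def, dihN2, ← hu, ← hv, real_inner_comm]; exact inner_cross_right _ _
  set C := Real.cos θ
  set S := Real.sin θ
  set w : EuclideanSpace ℝ (Fin 3) := ⟪u,v⟫ • u - ⟪u,u⟫ • v with hw
  -- rotated second normal
  have hd' : dihN2 b c (c + rodrigues (‖u‖⁻¹ • u) θ v)
      = C • n2 + (S * ‖u‖⁻¹) • w := by
    simp only [hn2def, dihN2, ← hu, ← hv, add_sub_cancel_left, rodrigues, cross3_add_right,
      cross3_smul_right, cross3_smul_left, cross3_triple, cross3_self, smul_zero, add_zero,
      hw, smul_smul]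
    rfl
  -- norm preservation
  have hnw : ⟪n2, w⟫ = 0 := by
    rw [hw, inner_sub_right, real_inner_smul_right, real_inner_smul_right, hn2u, hn2v]; ring
  have hww : ⟪w, w⟫ = ⟪u,u⟫ * ⟪n2,n2⟫ := by
    rw [hn2def, dihN2, ← hu, ← hv, lagrange3, hw]
    simp only [inner_sub_left, inner_sub_right, real_inner_smul_left, real_inner_smul_right,
      real_inner_comm v u]
    ring
  have hnorm : ‖dihN2 b c (c + rodrigues (‖u‖⁻¹ • u) θ v)‖ = ‖n2‖ := by
    have h : ⟪dihN2 b c (c + rodrigues (‖u‖⁻¹ • u) θ v),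
        dihN2 b c (c + rodrigues (‖u‖⁻¹ • u) θ v)⟫ = ⟪n2, n2⟫ := by
      rw [hd']
      simp only [inner_add_left, inner_add_right, real_inner_smul_left,
        real_inner_smul_right, real_inner_comm w n2, hnw, hww, huu]
      have hnw' : ⟪w, n2⟫ = (0:ℝ) := by rw [real_inner_comm]; exact hnw
      rw [hnw']
      have hS : C ^ 2 + S ^ 2 = 1 := by
        simpa [C, S] using Real.cos_sq_add_sin_sq θ
      have h0 : ‖u‖⁻¹ * ‖u‖ = 1 := inv_mul_cancel₀ hun
      linear_combination ⟪n2,n2⟫ * hS + ⟪n2,n2⟫ * S^2 * (‖u‖⁻¹*‖u‖+1) * h0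
    have h2' : ‖dihN2 b c (c + rodrigues (‖u‖⁻¹ • u) θ v)‖ ^ 2 = ‖n2‖ ^ 2 := by
      rw [← real_inner_self_eq_norm_sq, ← real_inner_self_eq_norm_sq, h]
    nlinarith [norm_nonneg (dihN2 b c (c + rodrigues (‖u‖⁻¹ • u) θ v)), norm_nonneg n2]
  -- inner product with n1
  have hIP : ⟪n1, dihN2 b c (c + rodrigues (‖u‖⁻¹ • u) θ v)⟫
      = C * ⟪n1, n2⟫ - S * ‖u‖⁻¹ * ⟪u,u⟫ * ⟪n1, v⟫ := by
    rw [hd', inner_add_right, real_inner_smul_right, real_inner_smul_right, hw,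
      inner_sub_right, real_inner_smul_right, real_inner_smul_right, hn1u]
    ring
  -- triple products
  have hT : ⟪u, cross3 n1 n2⟫ = ⟪n1, v⟫ * ⟪u,u⟫ := by
    rw [hn2def, dihN2, ← hu, ← hv, cross3_triple, inner_sub_right,
      real_inner_smul_right, real_inner_smul_right, hn1u]
    ring
  have hT1 : ⟪u, cross3 n1 u⟫ = 0 := by
    rw [triple_cyclic, cross3_self, inner_zero_right]
  have hT2 : ⟪u, cross3 n1 v⟫ = -⟪n1, n2⟫ := by
    rw [triple_cyclic, cross3_anticomm v u, inner_neg_right, hn2def, dihN2, ← hu, ← hv]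
  have hTP : ⟪u, cross3 n1 (dihN2 b c (c + rodrigues (‖u‖⁻¹ • u) θ v))⟫
      = C * (⟪n1,v⟫ * ⟪u,u⟫) + S * ‖u‖⁻¹ * ⟪u,u⟫ * ⟪n1, n2⟫ := by
    rw [hd', cross3_add_right, cross3_smul_right, cross3_smul_right, hw,
      cross3_sub_right, cross3_smul_right, cross3_smul_right,
      inner_add_right, real_inner_smul_right, real_inner_smul_right, inner_sub_right,
      real_inner_smul_right, real_inner_smul_right, hT, hT1, hT2]
    ring
  -- previous angle values
  have hcos' : Real.cos τ = ⟪n1, n2⟫ / (‖n1‖ * ‖n2‖) := by rw [hcos]; rfl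
  have hsin' : Real.sin τ = ⟪n1, v⟫ * ⟪u,u⟫ / (‖u‖ * ‖n1‖ * ‖n2‖) := by
    rw [hsin, sinDih, ← hu, ← hn1def, ← hn2def, hT]
  constructor
  · rw [Real.cos_add, hcos', hsin', cosDih, ← hn1def, hIP, hnorm, huu]
    field_simp
    ring
  · rw [Real.sin_add, hcos', hsin', sinDih, ← hu, ← hn1def, hTP, hnorm, huu]
    field_simp
    ring
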